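/- arXiv:2207.13526 — 6 statements merged into one kernel-verified Lean document; each statement's English description precedes it below -/
import Mathlib

section
/- (Aitken / generalized Gauss–Markov inequality) Let A be a real p×n matrix with rank A = n and let C be a symmetric positive definite real p×p matrix. Then for every real n×p matrix L with L·A = Iₙ, the matrix L·C·Lᵀ − (AᵀC⁻¹A)⁻¹ is positive semidefinite. In other words, among all linear unbiased estimators Lb of u from data b = Au + e with cov(e) = C, the GLS estimator has the smallest covariance in the Loewner order. -/
open Matrix

/-- **Aitken / generalized Gauss–Markov inequality.** For any linear unbiased
estimator `L` (i.e. `L * A = 1`), the matrix `L C Lᵀ − (AᵀC⁻¹A)⁻¹` is positive semidefinite. -/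
theorem aitken_inequality {p n : ℕ}
    (A : Matrix (Fin p) (Fin n) ℝ) (C : Matrix (Fin p) (Fin p) ℝ)
    (hA : A.rank = n) (hC : C.PosDef)
    (L : Matrix (Fin n) (Fin p) ℝ) (hL : L * A = 1) :
    (L * C * Lᵀ - (Aᵀ * C⁻¹ * A)⁻¹).PosSemidef := by
  have hCi : (C⁻¹).PosDef := hC.inv
  have hCit : (C⁻¹)ᵀ = C⁻¹ := by simpa using hCi.isHermitian.eq
  have hCt : Cᵀ = C := by simpa using hC.isHermitian.eq
  have hCunit : IsUnit C.det := hC.det_pos.ne'.isUnit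
  have hCinv : C * C⁻¹ = 1 := mul_nonsing_inv C hCunit
  have hCinv' : C⁻¹ * C = 1 := nonsing_inv_mul C hCunit
  set M := Aᵀ * C⁻¹ * A with hM
  have hMinj : Function.Injective A.mulVec := by
    intro x y hxy
    have := congrArg L.mulVec hxy
    simpa [mulVec_mulVec, hL] using this
  have hMpd : M.PosDef := by
    refine PosDef.of_dotProduct_mulVec_pos ?_ ?_
    · show Mᴴ = M
      simp [hM, conjTranspose_mul, Matrix.mul_assoc, hCit]
    · intro x hx
      have hAx : A *ᵥ x ≠ 0 := fun h => hx (hMinj (by simpa using h))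
      have := hCi.dotProduct_mulVec_pos hAx
      have hdot : star x ⬝ᵥ (M *ᵥ x) = star (A *ᵥ x) ⬝ᵥ (C⁻¹ *ᵥ (A *ᵥ x)) := by
        simp [hM, ← mulVec_mulVec, dotProduct_mulVec, vecMul_transpose]
      rw [hdot]; exact this
  have hMunit : IsUnit M.det := hMpd.det_pos.ne'.isUnit
  have hMit : (M⁻¹)ᵀ = M⁻¹ := by simpa using hMpd.isHermitian.inv.eq
  set G := M⁻¹ * Aᵀ * C⁻¹ with hG
  have hGt : Gᵀ = C⁻¹ * A * M⁻¹ := by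
    rw [hG, transpose_mul, transpose_mul, hCit, hMit, transpose_transpose, Matrix.mul_assoc]
  have key : L * C * Lᵀ - M⁻¹ = (L - G) * C * (L - G)ᵀ := by
    have h1 : L * C * Gᵀ = M⁻¹ := by
      rw [hGt]
      calc L * C * (C⁻¹ * A * M⁻¹) = L * (C * C⁻¹) * A * M⁻¹ := by
            simp [Matrix.mul_assoc]
        _ = M⁻¹ := by rw [hCinv]; simp [Matrix.mul_assoc, ← Matrix.mul_assoc L A, hL]
    have h2 : G * C * Lᵀ = M⁻¹ := by
      have := congrArg transpose h1
      simp only [transpose_mul, transpose_transpose, hCt, hMit] at this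
      rw [← this, Matrix.mul_assoc]
    have h3 : G * C * Gᵀ = M⁻¹ := by
      rw [hGt, hG]
      calc M⁻¹ * Aᵀ * C⁻¹ * C * (C⁻¹ * A * M⁻¹)
          = M⁻¹ * (Aᵀ * ((C⁻¹ * C) * (C⁻¹ * A))) * M⁻¹ := by simp [Matrix.mul_assoc]
        _ = M⁻¹ * M * M⁻¹ := by rw [hCinv']; simp [hM, Matrix.mul_assoc]
        _ = M⁻¹ := by rw [nonsing_inv_mul M hMunit, Matrix.one_mul]
    simp only [transpose_sub, Matrix.sub_mul, Matrix.mul_sub, h1, h2, h3]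
    abel
  rw [show (Aᵀ * C⁻¹ * A)⁻¹ = M⁻¹ from rfl, key]
  have h := hC.posSemidef.mul_mul_conjTranspose_same (L - G)
  have he : (L - G)ᴴ = (L - G)ᵀ := by ext i j; simp [conjTranspose]
  rwa [he] at h
end

section
/- (Aitken equality case) Let A be a real p×n matrix with rank A = n and let C be a symmetric positive definite real p×p matrix. If L is a real n×p matrix with L·A = Iₙ and L·C·Lᵀ = (AᵀC⁻¹A)⁻¹, then L = (AᵀC⁻¹A)⁻¹AᵀC⁻¹. That is, the GLS estimator is the unique best linear unbiased estimator. -/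
open Matrix
open scoped MatrixOrder

/-- **Aitken equality case.** If a linear unbiased estimator `L` attains the
GLS covariance `(AᵀC⁻¹A)⁻¹`, then `L` is the GLS estimator `(AᵀC⁻¹A)⁻¹AᵀC⁻¹`. -/
theorem aitken_equality_case {p n : ℕ}
    (A : Matrix (Fin p) (Fin n) ℝ) (C : Matrix (Fin p) (Fin p) ℝ)
    (hA : A.rank = n) (hC : C.PosDef)
    (L : Matrix (Fin n) (Fin p) ℝ) (hL : L * A = 1)
    (hcov : L * C * Lᵀ = (Aᵀ * C⁻¹ * A)⁻¹) :
    L = (Aᵀ * C⁻¹ * A)⁻¹ * (Aᵀ * C⁻¹) := by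
  have hCi : C⁻¹.PosDef := hC.inv
  have hCunit : IsUnit C := hC.isUnit
  have hCdet : IsUnit C.det := (isUnit_iff_isUnit_det C).mp hCunit
  have hCsymm : Cᵀ = C := by
    have := hC.isHermitian
    rwa [IsHermitian, conjTranspose_eq_transpose_of_trivial] at this
  have hCisymm : (C⁻¹)ᵀ = C⁻¹ := by rw [transpose_nonsing_inv, hCsymm]
  -- injectivity of mulVec A
  have hinj : Function.Injective A.mulVec := by
    rw [← coe_mulVecLin, ← LinearMap.ker_eq_bot]
    have hrn : Module.finrank ℝ (LinearMap.range A.mulVecLin)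
        + Module.finrank ℝ (LinearMap.ker A.mulVecLin) = n := by
      rw [LinearMap.finrank_range_add_finrank_ker]; simp
    rw [Matrix.rank] at hA
    rw [hA] at hrn
    have : Module.finrank ℝ (LinearMap.ker A.mulVecLin) = 0 := by omega
    exact Submodule.finrank_eq_zero.mp this
  -- G posdef
  have hGpd : (Aᵀ * C⁻¹ * A).PosDef := by
    refine PosDef.of_dotProduct_mulVec_pos ?_ ?_
    · rw [IsHermitian, conjTranspose_eq_transpose_of_trivial, transpose_mul, transpose_mul,
        transpose_transpose, hCisymm, Matrix.mul_assoc]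
    · intro x hx
      have hAx : A *ᵥ x ≠ 0 := fun h => hx (hinj (by simpa using h))
      have : star x ⬝ᵥ ((Aᵀ * C⁻¹ * A) *ᵥ x) = star (A *ᵥ x) ⬝ᵥ (C⁻¹ *ᵥ (A *ᵥ x)) := by
        simp only [star_trivial, ← mulVec_mulVec, dotProduct_mulVec, vecMul_transpose]
      rw [this]
      exact hCi.dotProduct_mulVec_pos hAx
  set G := Aᵀ * C⁻¹ * A with hGdef
  have hGunit : IsUnit G := hGpd.isUnit
  have hGdet : IsUnit G.det := (isUnit_iff_isUnit_det G).mp hGunit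
  have hGsymm : Gᵀ = G := by
    have := hGpd.isHermitian
    rwa [IsHermitian, conjTranspose_eq_transpose_of_trivial] at this
  have hGisymm : (G⁻¹)ᵀ = G⁻¹ := by rw [transpose_nonsing_inv, hGsymm]
  set D := L - G⁻¹ * (Aᵀ * C⁻¹) with hD
  have hDt : Dᵀ = Lᵀ - C⁻¹ * A * G⁻¹ := by
    rw [hD, transpose_sub, transpose_mul, transpose_mul, hGisymm, hCisymm,
      transpose_transpose, Matrix.mul_assoc]
  have hDC : D * C = L * C - G⁻¹ * Aᵀ := by
    rw [hD, Matrix.sub_mul, Matrix.mul_assoc, Matrix.mul_assoc,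
      Matrix.nonsing_inv_mul C hCdet, Matrix.mul_one]
  have hDCDT : D * C * Dᵀ = 0 := by
    rw [hDC, hDt, Matrix.sub_mul, Matrix.mul_sub, Matrix.mul_sub, hcov]
    have t2 : L * C * (C⁻¹ * A * G⁻¹) = G⁻¹ := by
      rw [Matrix.mul_assoc L C, Matrix.mul_assoc C⁻¹ A, ← Matrix.mul_assoc C C⁻¹,
        Matrix.mul_nonsing_inv C hCdet, Matrix.one_mul, ← Matrix.mul_assoc, hL, Matrix.one_mul]
    have t3 : G⁻¹ * Aᵀ * Lᵀ = G⁻¹ := by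
      rw [Matrix.mul_assoc, ← transpose_mul, hL, transpose_one, Matrix.mul_one]
    have t4 : G⁻¹ * Aᵀ * (C⁻¹ * A * G⁻¹) = G⁻¹ := by
      rw [Matrix.mul_assoc G⁻¹ Aᵀ, ← Matrix.mul_assoc Aᵀ, ← Matrix.mul_assoc Aᵀ, ← hGdef,
        ← Matrix.mul_assoc, Matrix.nonsing_inv_mul G hGdet, Matrix.one_mul]
    rw [t2, t3, t4]
    abel
  -- D C Dᵀ = 0 → D = 0
  have hS2 : CFC.sqrt C * CFC.sqrt C = C := CFC.sqrt_mul_sqrt_self C hC.posSemidef.nonneg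
  have hSsymm : (CFC.sqrt C)ᴴ = CFC.sqrt C := (CFC.sqrt_nonneg C).posSemidef.isHermitian
  have hDS : D * CFC.sqrt C = 0 := by
    rw [← Matrix.self_mul_conjTranspose_eq_zero, conjTranspose_mul, hSsymm,
      conjTranspose_eq_transpose_of_trivial, Matrix.mul_assoc, ← Matrix.mul_assoc _ _ Dᵀ,
      hS2, ← Matrix.mul_assoc, hDCDT]
  have hDCzero : D * C = 0 := by
    rw [← hS2, ← Matrix.mul_assoc, hDS, Matrix.zero_mul]
  have hD0 : D = 0 := by
    have := congrArg (· * C⁻¹) hDCzero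
    simpa [Matrix.mul_assoc, Matrix.mul_nonsing_inv C hCdet] using this
  exact sub_eq_zero.mp (hD ▸ hD0 : L - G⁻¹ * (Aᵀ * C⁻¹) = 0)
end

section
/- Let A be a real p×n matrix, U an invertible real p×p matrix, and b ∈ ℝᵖ. Suppose UA = QR where Q is a real p×n matrix with orthonormal columns (QᵀQ = Iₙ) and R is an invertible upper triangular n×n matrix (a thin QR factorization). Then x̂ = R⁻¹Qᵀ(Ub) is the unique global minimizer over ℝⁿ of x ↦ ‖U(Ax − b)‖₂². -/
open Matrix

/-- If `UA = QR` is a thin QR factorization (`QᵀQ = Iₙ`, `R` invertible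
upper triangular), then `x̂ = R⁻¹Qᵀ(Ub)` is the unique global minimizer of
`x ↦ ‖U(Ax − b)‖₂²`. -/
theorem gls_thinQR_minimizer {p n : ℕ}
    (A : Matrix (Fin p) (Fin n) ℝ) (U : Matrix (Fin p) (Fin p) ℝ)
    (hU : IsUnit U) (b : Fin p → ℝ)
    (Q : Matrix (Fin p) (Fin n) ℝ) (R : Matrix (Fin n) (Fin n) ℝ)
    (hQ : Qᵀ * Q = 1) (hR : IsUnit R) (hRtri : R.BlockTriangular id)
    (hQR : U * A = Q * R) :
    ∀ x : Fin n → ℝ,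
      x ≠ R⁻¹ *ᵥ (Qᵀ *ᵥ (U *ᵥ b)) →
      (U *ᵥ (A *ᵥ (R⁻¹ *ᵥ (Qᵀ *ᵥ (U *ᵥ b))) - b)) ⬝ᵥ
        (U *ᵥ (A *ᵥ (R⁻¹ *ᵥ (Qᵀ *ᵥ (U *ᵥ b))) - b)) <
      (U *ᵥ (A *ᵥ x - b)) ⬝ᵥ (U *ᵥ (A *ᵥ x - b)) := by
  intro x hx
  set c : Fin p → ℝ := U *ᵥ b with hc
  set y : Fin n → ℝ := Qᵀ *ᵥ c with hy
  have hRinv : R * R⁻¹ = 1 :=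
    Matrix.mul_nonsing_inv R ((Matrix.isUnit_iff_isUnit_det R).mp hR)
  have key : ∀ z : Fin n → ℝ, U *ᵥ (A *ᵥ z - b) = Q *ᵥ (R *ᵥ z - y) + (Q *ᵥ y - c) := by
    intro z
    have h1 : U *ᵥ (A *ᵥ z) = Q *ᵥ (R *ᵥ z) := by
      rw [mulVec_mulVec, mulVec_mulVec, hQR]
    rw [Matrix.mulVec_sub, h1, Matrix.mulVec_sub]
    abel
  have horth : ∀ v : Fin n → ℝ, (Q *ᵥ v) ⬝ᵥ (Q *ᵥ y - c) = 0 := by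
    intro v
    rw [dotProduct_comm, Matrix.dotProduct_mulVec, Matrix.sub_vecMul,
      Matrix.vecMul_mulVec, hQ, Matrix.vecMul_one]
    have : c ᵥ* Q = y := by rw [hy, Matrix.mulVec_transpose]
    rw [this, sub_self, zero_dotProduct]
  have hQQ : ∀ v : Fin n → ℝ, (Q *ᵥ v) ⬝ᵥ (Q *ᵥ v) = v ⬝ᵥ v := by
    intro v
    rw [Matrix.dotProduct_mulVec, Matrix.vecMul_mulVec, hQ, Matrix.vecMul_one]
  have hnorm : ∀ z : Fin n → ℝ,
      (U *ᵥ (A *ᵥ z - b)) ⬝ᵥ (U *ᵥ (A *ᵥ z - b)) =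
      (R *ᵥ z - y) ⬝ᵥ (R *ᵥ z - y) + (Q *ᵥ y - c) ⬝ᵥ (Q *ᵥ y - c) := by
    intro z
    rw [key z, add_dotProduct, dotProduct_add, dotProduct_add, hQQ, horth,
      dotProduct_comm (Q *ᵥ y - c) (Q *ᵥ (R *ᵥ z - y)), horth]
    ring
  rw [hnorm, hnorm]
  have hhat : R *ᵥ (R⁻¹ *ᵥ y) - y = 0 := by
    rw [mulVec_mulVec, hRinv, one_mulVec, sub_self]
  rw [hhat, zero_dotProduct, zero_add]
  have hgx : R *ᵥ x - y ≠ 0 := by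
    intro h
    apply hx
    have : R *ᵥ x = y := by linear_combination (norm := abel) h
    rw [← this, mulVec_mulVec, Matrix.nonsing_inv_mul R ((Matrix.isUnit_iff_isUnit_det R).mp hR),
      one_mulVec]
  have hpos : 0 < (R *ᵥ x - y) ⬝ᵥ (R *ᵥ x - y) := by
    have hnn : 0 ≤ (R *ᵥ x - y) ⬝ᵥ (R *ᵥ x - y) := by
      simp only [dotProduct]
      exact Finset.sum_nonneg fun i _ => mul_self_nonneg _
    rcases lt_or_eq_of_le hnn with h | h
    · exact h
    · exact absurd (dotProduct_self_eq_zero.mp h.symm) hgx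
  linarith
end

section
/- Let R be an invertible real (n₁+n₂)×(n₁+n₂) matrix written in block upper triangular form R = [[R₁₁, R₁₂],[0, R₂₂]] with R₁₁ of size n₁×n₁ and R₂₂ of size n₂×n₂. Then R₂₂ is invertible and the bottom-right n₂×n₂ block of (RᵀR)⁻¹ equals (R₂₂ᵀR₂₂)⁻¹. (Hence the covariance of the last, filtered, state estimate satisfies cov(û_{k|k})⁻¹ = R̃_{k,k}ᵀR̃_{k,k}, where R̃_{k,k} is the last diagonal block of the triangular factor.) -/
open Matrix

/-- For an invertible block upper triangular `R = [[R₁₁, R₁₂],[0, R₂₂]]`,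
the block `R₂₂` is invertible and the bottom-right block of `(RᵀR)⁻¹` equals
`(R₂₂ᵀR₂₂)⁻¹`. -/
theorem filtered_covariance_block {n₁ n₂ : ℕ}
    (R₁₁ : Matrix (Fin n₁) (Fin n₁) ℝ) (R₁₂ : Matrix (Fin n₁) (Fin n₂) ℝ)
    (R₂₂ : Matrix (Fin n₂) (Fin n₂) ℝ)
    (hR : IsUnit (fromBlocks R₁₁ R₁₂ 0 R₂₂)) :
    IsUnit R₂₂ ∧
    ((fromBlocks R₁₁ R₁₂ 0 R₂₂)ᵀ * fromBlocks R₁₁ R₁₂ 0 R₂₂)⁻¹.toBlocks₂₂ =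
      (R₂₂ᵀ * R₂₂)⁻¹ := by
  obtain ⟨hA, hD⟩ := isUnit_fromBlocks_zero₂₁.mp hR
  refine ⟨hD, ?_⟩

  rw [Matrix.mul_inv_rev _ _, ← Matrix.transpose_nonsing_inv,
    inv_fromBlocks_zero₂₁_of_isUnit_iff _ _ _ (iff_of_true hA hD),
    fromBlocks_transpose, fromBlocks_multiply, toBlocks_fromBlocks₂₂,
    Matrix.mul_inv_rev, ← Matrix.transpose_nonsing_inv]
  simp
end

section
/- Let R be an invertible real (n₁+n₂)×(n₁+n₂) matrix, and let Q be an (n₁+n₂)×(n₁+n₂) orthogonal matrix (QᵀQ = I) such that QᵀR = [[S₁₁, S₁₂],[S₂₁, 0]] in block form, where S₂₁ is n₁×n₁ (and S₁₂ is n₂×n₂, S₁₁ is n₂×n₁, and the bottom-right n₁×n₂ block is zero). Then S₂₁ is invertible and the top-left n₁×n₁ block of (RᵀR)⁻¹ equals (S₂₁ᵀS₂₁)⁻¹. (This is the correctness of the orthogonal-transformation algorithm that produces inverse-factor representations of the covariance matrices of smoothed state estimates.) -/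
open Matrix

/-- If `R` is invertible and `Q` is orthogonal with
`QᵀR = [[S₁₁, S₁₂],[S₂₁, 0]]` (where `S₂₁` is `n₁ × n₁`), then `S₂₁` is invertible and the
top-left `n₁ × n₁` block of `(RᵀR)⁻¹` equals `(S₂₁ᵀS₂₁)⁻¹`. -/
theorem smoothed_covariance_block {n₁ n₂ : ℕ}
    (R : Matrix (Fin n₁ ⊕ Fin n₂) (Fin n₁ ⊕ Fin n₂) ℝ) (hR : IsUnit R)
    (Q : Matrix (Fin n₁ ⊕ Fin n₂) (Fin n₂ ⊕ Fin n₁) ℝ) (hQ : Qᵀ * Q = 1)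
    (S₁₁ : Matrix (Fin n₂) (Fin n₁) ℝ) (S₁₂ : Matrix (Fin n₂) (Fin n₂) ℝ)
    (S₂₁ : Matrix (Fin n₁) (Fin n₁) ℝ)
    (hQR : Qᵀ * R = fromBlocks S₁₁ S₁₂ S₂₁ 0) :
    IsUnit S₂₁ ∧ ((Rᵀ * R)⁻¹).toBlocks₁₁ = (S₂₁ᵀ * S₂₁)⁻¹ := by
  have hRdet : IsUnit R.det := (isUnit_iff_isUnit_det _).mp hR
  set S : Matrix (Fin n₂ ⊕ Fin n₁) (Fin n₁ ⊕ Fin n₂) ℝ := fromBlocks S₁₁ S₁₂ S₂₁ 0 with hS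
  -- Q * Qᵀ = 1
  have hQQT : Q * Qᵀ = 1 :=
    (mul_eq_one_comm_of_equiv (Equiv.sumComm (Fin n₁) (Fin n₂))).mpr hQ
  -- a two-sided inverse of S
  set T : Matrix (Fin n₁ ⊕ Fin n₂) (Fin n₂ ⊕ Fin n₁) ℝ := R⁻¹ * Q with hT
  have hST : S * T = 1 := by
    rw [← hQR, hT, Matrix.mul_assoc, Matrix.mul_nonsing_inv_cancel_left _ _ hRdet, hQ]
  have hTS : T * S = 1 := by
    rw [← hQR, hT, Matrix.mul_assoc, ← Matrix.mul_assoc Q Qᵀ R, hQQT, Matrix.one_mul,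
      Matrix.nonsing_inv_mul _ hRdet]
  -- block equations
  have hST2 : fromBlocks S₁₁ S₁₂ S₂₁ 0 *
      fromBlocks T.toBlocks₁₁ T.toBlocks₁₂ T.toBlocks₂₁ T.toBlocks₂₂ = fromBlocks 1 0 0 1 := by
    rw [fromBlocks_toBlocks, fromBlocks_one, ← hS]; exact hST
  rw [fromBlocks_multiply] at hST2
  have h22 : S₂₁ * T.toBlocks₁₂ = 1 := by
    have h := congrArg Matrix.toBlocks₂₂ hST2
    rw [toBlocks_fromBlocks₂₂, toBlocks_fromBlocks₂₂] at h
    rw [← h, Matrix.zero_mul, add_zero]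
  have hTS2 : fromBlocks T.toBlocks₁₁ T.toBlocks₁₂ T.toBlocks₂₁ T.toBlocks₂₂ *
      fromBlocks S₁₁ S₁₂ S₂₁ 0 = fromBlocks 1 0 0 1 := by
    rw [fromBlocks_toBlocks, fromBlocks_one, ← hS]; exact hTS
  rw [fromBlocks_multiply] at hTS2
  have h12 : T.toBlocks₂₁ * S₁₂ = 1 := by
    have h := congrArg Matrix.toBlocks₂₂ hTS2
    rw [toBlocks_fromBlocks₂₂, toBlocks_fromBlocks₂₂] at h
    rw [← h, Matrix.mul_zero, add_zero]
  have hS21 : IsUnit S₂₁ := ⟨⟨S₂₁, T.toBlocks₁₂, h22, mul_eq_one_comm.mp h22⟩, rfl⟩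
  have hS12 : IsUnit S₁₂ := ⟨⟨S₁₂, T.toBlocks₂₁, mul_eq_one_comm.mp h12, h12⟩, rfl⟩
  have hS21d : IsUnit S₂₁.det := (isUnit_iff_isUnit_det _).mp hS21
  have hS12d : IsUnit S₁₂.det := (isUnit_iff_isUnit_det _).mp hS12
  refine ⟨hS21, ?_⟩
  -- explicit inverse of S
  set M : Matrix (Fin n₁ ⊕ Fin n₂) (Fin n₂ ⊕ Fin n₁) ℝ :=
    fromBlocks 0 S₂₁⁻¹ S₁₂⁻¹ (-(S₁₂⁻¹ * S₁₁ * S₂₁⁻¹)) with hM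
  have hSM : S * M = 1 := by
    rw [hS, hM, fromBlocks_multiply, ← fromBlocks_one]
    congr 1 <;>
      simp [Matrix.mul_nonsing_inv _ hS12d, Matrix.mul_nonsing_inv _ hS21d,
        Matrix.mul_assoc, Matrix.mul_nonsing_inv_cancel_left _ _ hS12d]
  have hMS : M * S = 1 := by
    rw [hS, hM, fromBlocks_multiply, ← fromBlocks_one]
    congr 1 <;>
      simp [Matrix.nonsing_inv_mul _ hS12d, Matrix.nonsing_inv_mul _ hS21d,
        Matrix.mul_assoc]
  -- RᵀR = SᵀS
  have hRR : Rᵀ * R = Sᵀ * S := by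
    calc Rᵀ * R = Rᵀ * (Q * (Qᵀ * R)) := by
          rw [← Matrix.mul_assoc Q Qᵀ R, hQQT, Matrix.one_mul]
    _ = (Qᵀ * R)ᵀ * (Qᵀ * R) := by
          rw [transpose_mul, transpose_transpose, Matrix.mul_assoc]
    _ = Sᵀ * S := by rw [hQR]
  have hinv : (Rᵀ * R)⁻¹ = M * Mᵀ := by
    rw [hRR]
    apply inv_eq_right_inv
    calc Sᵀ * S * (M * Mᵀ) = Sᵀ * (S * M) * Mᵀ := by
          rw [Matrix.mul_assoc Sᵀ S (M * Mᵀ), ← Matrix.mul_assoc S M Mᵀ,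
            ← Matrix.mul_assoc Sᵀ (S * M) Mᵀ]
    _ = (M * S)ᵀ := by rw [hSM, Matrix.mul_one, ← transpose_mul]
    _ = 1 := by rw [hMS, transpose_one]
  rw [hinv, hM]
  have hMT : (fromBlocks 0 S₂₁⁻¹ S₁₂⁻¹ (-(S₁₂⁻¹ * S₁₁ * S₂₁⁻¹)))ᵀ =
      fromBlocks 0 S₁₂⁻¹ᵀ S₂₁⁻¹ᵀ (-(S₁₂⁻¹ * S₁₁ * S₂₁⁻¹))ᵀ := by
    rw [fromBlocks_transpose, transpose_zero]
  rw [hMT, fromBlocks_multiply, toBlocks_fromBlocks₁₁, Matrix.mul_zero, zero_add,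
    Matrix.mul_inv_rev, Matrix.transpose_nonsing_inv]
end

section
/- (Duncan–Horn equivalence, one-step form) Let P be a symmetric positive definite n×n real matrix, C a symmetric positive definite m×m real matrix, G a real m×n matrix, a ∈ ℝⁿ, and o ∈ ℝᵐ. Then the function u ↦ (u − a)ᵀP⁻¹(u − a) + (Gu − o)ᵀC⁻¹(Gu − o) has a unique global minimizer over ℝⁿ, given by the Kalman measurement-update formula û = a + PGᵀ(GPGᵀ + C)⁻¹(o − Ga). -/
open Matrix

/-- Quadratic expansion for a symmetric matrix. -/
lemma quad_expand {n : ℕ} (Q : Matrix (Fin n) (Fin n) ℝ) (hQ : Qᵀ = Q) (x d : Fin n → ℝ) :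
    (x + d) ⬝ᵥ (Q *ᵥ (x + d)) =
      x ⬝ᵥ (Q *ᵥ x) + 2 * (d ⬝ᵥ (Q *ᵥ x)) + d ⬝ᵥ (Q *ᵥ d) := by
  have hsym : x ⬝ᵥ (Q *ᵥ d) = d ⬝ᵥ (Q *ᵥ x) := by
    rw [dotProduct_mulVec, ← mulVec_transpose, hQ, dotProduct_comm]
  simp only [mulVec_add, dotProduct_add, add_dotProduct, hsym]
  ring

/-- **Duncan–Horn equivalence, one-step form.** The function
`u ↦ (u − a)ᵀP⁻¹(u − a) + (Gu − o)ᵀC⁻¹(Gu − o)` has a unique global minimizer, given by the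
Kalman measurement update `û = a + PGᵀ(GPGᵀ + C)⁻¹(o − Ga)`. -/
theorem duncan_horn_measurement_update {n m : ℕ}
    (P : Matrix (Fin n) (Fin n) ℝ) (C : Matrix (Fin m) (Fin m) ℝ)
    (hP : P.PosDef) (hC : C.PosDef)
    (G : Matrix (Fin m) (Fin n) ℝ) (a : Fin n → ℝ) (o : Fin m → ℝ) :
    ∀ u : Fin n → ℝ,
      u ≠ a + (P * Gᵀ * (G * P * Gᵀ + C)⁻¹) *ᵥ (o - G *ᵥ a) →
      ((a + (P * Gᵀ * (G * P * Gᵀ + C)⁻¹) *ᵥ (o - G *ᵥ a) - a) ⬝ᵥ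
          (P⁻¹ *ᵥ (a + (P * Gᵀ * (G * P * Gᵀ + C)⁻¹) *ᵥ (o - G *ᵥ a) - a)) +
        (G *ᵥ (a + (P * Gᵀ * (G * P * Gᵀ + C)⁻¹) *ᵥ (o - G *ᵥ a)) - o) ⬝ᵥ
          (C⁻¹ *ᵥ (G *ᵥ (a + (P * Gᵀ * (G * P * Gᵀ + C)⁻¹) *ᵥ (o - G *ᵥ a)) - o))) <
      ((u - a) ⬝ᵥ (P⁻¹ *ᵥ (u - a)) + (G *ᵥ u - o) ⬝ᵥ (C⁻¹ *ᵥ (G *ᵥ u - o))) := by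
  intro u hu
  set S : Matrix (Fin m) (Fin m) ℝ := G * P * Gᵀ + C with hSdef
  set K : Matrix (Fin n) (Fin m) ℝ := P * Gᵀ * S⁻¹ with hKdef
  set w : Fin m → ℝ := o - G *ᵥ a with hwdef
  set Q : Matrix (Fin n) (Fin n) ℝ := P⁻¹ with hQdef
  set R : Matrix (Fin m) (Fin m) ℝ := C⁻¹ with hRdef
  have hQpd : Q.PosDef := hP.inv
  have hRpd : R.PosDef := hC.inv
  have hQsym : Qᵀ = Q := hQpd.isHermitian
  have hRsym : Rᵀ = R := hRpd.isHermitian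
  have hSpd : S.PosDef := by
    have h1 : (G * P * Gᵀ).PosSemidef := by
      simpa using hP.posSemidef.mul_mul_conjTranspose_same G
    exact Matrix.PosDef.posSemidef_add h1 hC
  have hPinv : Q * P = 1 := Matrix.nonsing_inv_mul P (isUnit_iff_ne_zero.mpr hP.det_pos.ne')
  have hCinv : R * C = 1 := Matrix.nonsing_inv_mul C (isUnit_iff_ne_zero.mpr hC.det_pos.ne')
  have hSinv : S * S⁻¹ = 1 := Matrix.mul_nonsing_inv S (isUnit_iff_ne_zero.mpr hSpd.det_pos.ne')
  -- key matrix identity: (Q + Gᵀ R G) K = Gᵀ R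
  have hkey' : (Q + Gᵀ * R * G) * (P * Gᵀ) = Gᵀ * R * S := by
    rw [hSdef, Matrix.add_mul, Matrix.mul_add, ← Matrix.mul_assoc Q P Gᵀ, hPinv, Matrix.one_mul,
      Matrix.mul_assoc Gᵀ R C, hCinv, Matrix.mul_one]
    simp only [Matrix.mul_assoc]
    abel
  have hkey : Q * K + Gᵀ * R * G * K = Gᵀ * R := by
    have h2 : Q * K + Gᵀ * R * G * K = ((Q + Gᵀ * R * G) * (P * Gᵀ)) * S⁻¹ := by
      simp only [hKdef, Matrix.add_mul, Matrix.mul_assoc]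
    rw [h2, hkey', Matrix.mul_assoc, hSinv, Matrix.mul_one]
  -- abbreviations
  set v : Fin n → ℝ := K *ᵥ w with hvdef
  set uhat : Fin n → ℝ := a + v with huhatdef
  set d : Fin n → ℝ := u - uhat with hddef
  have hd0 : d ≠ 0 := fun h => hu (by rwa [hddef, sub_eq_zero] at h)
  -- decompositions
  have h1 : u - a = v + d := by rw [hddef, huhatdef]; abel
  have h2 : G *ᵥ u - o = (G *ᵥ v - w) + G *ᵥ d := by
    rw [hddef, huhatdef, hwdef]
    simp only [mulVec_sub, mulVec_add]
    abel
  -- cross term is zero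
  have hzero : Q *ᵥ v + Gᵀ *ᵥ (R *ᵥ (G *ᵥ v - w)) = 0 := by
    have expand : Q *ᵥ v + Gᵀ *ᵥ (R *ᵥ (G *ᵥ v - w)) =
        (Q * K + Gᵀ * R * G * K - Gᵀ * R) *ᵥ w := by
      simp only [hvdef, mulVec_sub, mulVec_mulVec, sub_mulVec, add_mulVec, Matrix.mul_assoc]
      abel
    rw [expand, hkey, sub_self, zero_mulVec]
  have hG : (G *ᵥ d) ⬝ᵥ (R *ᵥ (G *ᵥ v - w)) = d ⬝ᵥ (Gᵀ *ᵥ (R *ᵥ (G *ᵥ v - w))) := by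
    rw [dotProduct_comm (G *ᵥ d), dotProduct_mulVec (R *ᵥ (G *ᵥ v - w)) G d,
      ← mulVec_transpose, dotProduct_comm]
  have hcross : d ⬝ᵥ (Q *ᵥ v) + (G *ᵥ d) ⬝ᵥ (R *ᵥ (G *ᵥ v - w)) = 0 := by
    rw [hG, ← dotProduct_add, hzero, dotProduct_zero]
  -- positivity of the increment
  have hQd : 0 < d ⬝ᵥ (Q *ᵥ d) := by simpa using hQpd.dotProduct_mulVec_pos hd0
  have hRd : 0 ≤ (G *ᵥ d) ⬝ᵥ (R *ᵥ (G *ᵥ d)) := by simpa using hRpd.posSemidef.dotProduct_mulVec_nonneg (G *ᵥ d)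
  -- expand
  rw [show a + K *ᵥ w - a = v by rw [hvdef]; abel]
  rw [show G *ᵥ (a + K *ᵥ w) - o = G *ᵥ v - w by rw [hvdef, hwdef, mulVec_add]; abel]
  rw [h1, h2, quad_expand Q hQsym v d, quad_expand R hRsym (G *ᵥ v - w) (G *ᵥ d)]
  nlinarith [hcross, hQd, hRd]
end
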